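/- Let Δ₂° be the convex hull of {(-1,-1,-1), (-1,-1,11), (-1,2,-1), (1,-1,-1)} in ℤ³. Then Δ₂° is a reflexive polytope. -/

import Mathlib

open Finset

noncomputable section

abbrev V3 := Fin 3 → ℤ

def toR (v : V3) : Fin 3 → ℝ := fun i => (v i : ℝ)

def pairR (m v : Fin 3 → ℝ) : ℝ := ∑ i, m i * v i

def latticePoly (V : Finset V3) : Set (Fin 3 → ℝ) := convexHull ℝ (toR '' (V : Set V3))

def polarDual (P : Set (Fin 3 → ℝ)) : Set (Fin 3 → ℝ) := {m | ∀ v ∈ P, -1 ≤ pairR m v}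

/-- Reflexivity: the origin is interior, it is the unique interior lattice point, and the
polar dual is again a lattice polytope. -/
def IsReflexive (V : Finset V3) : Prop :=
  (0 : Fin 3 → ℝ) ∈ interior (latticePoly V) ∧
  (∀ v : V3, toR v ∈ interior (latticePoly V) → v = 0) ∧
  ∃ W : Finset V3, polarDual (latticePoly V) = latticePoly W

/-- The polytope `Δ₂° = Conv{(-1,-1,-1), (-1,-1,11), (-1,2,-1), (1,-1,-1)}`. -/
def Delta2 : Finset V3 :=
  {![(-1 : ℤ), -1, -1], ![(-1 : ℤ), -1, 11], ![(-1 : ℤ), 2, -1], ![(1 : ℤ), -1, -1]}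

/-- `Δ₂°` is a reflexive polytope. -/

-- real vertices
noncomputable def P1 : Fin 3 → ℝ := ![-1,-1,-1]
noncomputable def P2 : Fin 3 → ℝ := ![-1,-1,11]
noncomputable def P3 : Fin 3 → ℝ := ![-1,2,-1]
noncomputable def P4 : Fin 3 → ℝ := ![1,-1,-1]

lemma toR1 : toR ![(-1 : ℤ), -1, -1] = P1 := by
  funext i; fin_cases i <;> simp [toR, P1]
lemma toR2 : toR ![(-1 : ℤ), -1, 11] = P2 := by
  funext i; fin_cases i <;> simp [toR, P2]
lemma toR3 : toR ![(-1 : ℤ), 2, -1] = P3 := by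
  funext i; fin_cases i <;> simp [toR, P3]
lemma toR4 : toR ![(1 : ℤ), -1, -1] = P4 := by
  funext i; fin_cases i <;> simp [toR, P4]

lemma image_Delta2 : toR '' (Delta2 : Set V3) = {P1, P2, P3, P4} := by
  simp [Delta2, Set.image_insert_eq, toR1, toR2, toR3, toR4]

lemma mem_hull4 {s : Set (Fin 3 → ℝ)} {p1 p2 p3 p4 x : Fin 3 → ℝ}
    (h1 : p1 ∈ s) (h2 : p2 ∈ s) (h3 : p3 ∈ s) (h4 : p4 ∈ s)
    {w1 w2 w3 w4 : ℝ} (hw1 : 0 ≤ w1) (hw2 : 0 ≤ w2) (hw3 : 0 ≤ w3) (hw4 : 0 ≤ w4)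
    (hsum : w1 + w2 + w3 + w4 = 1)
    (hx : x = w1 • p1 + w2 • p2 + w3 • p3 + w4 • p4) : x ∈ convexHull ℝ s := by
  have := Finset.centerMass_mem_convexHull (s := s) (t := (Finset.univ : Finset (Fin 4)))
    (w := ![w1,w2,w3,w4]) (z := ![p1,p2,p3,p4]) ?_ ?_ ?_
  · convert this using 1
    rw [Finset.centerMass]
    rw [Fin.sum_univ_four, Fin.sum_univ_four]
    simp only [Matrix.cons_val_zero, Matrix.cons_val_one, Matrix.head_cons,
      Matrix.cons_val_two, Matrix.tail_cons, Matrix.cons_val_three]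
    rw [hsum]
    simp [hx]
  · intro i _; fin_cases i <;> assumption
  · rw [Fin.sum_univ_four]; simp only [Matrix.cons_val_zero, Matrix.cons_val_one, Matrix.head_cons,
      Matrix.cons_val_two, Matrix.tail_cons, Matrix.cons_val_three]; rw [hsum]; norm_num
  · intro i _; fin_cases i <;> simpa

lemma linF (a b c : ℝ) : IsLinearMap ℝ (fun x : Fin 3 → ℝ => a*x 0 + b*x 1 + c*x 2) := by
  constructor <;> intros <;> simp <;> ring

lemma convF (a b c : ℝ) : Convex ℝ {x : Fin 3 → ℝ | -1 ≤ a*x 0 + b*x 1 + c*x 2} :=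
  convex_halfSpace_ge (linF a b c) (-1)

lemma hrepP : latticePoly Delta2 =
    {x : Fin 3 → ℝ | -1 ≤ -6*x 0 + -4*x 1 + -1*x 2 ∧ -1 ≤ 0*x 0 + 0*x 1 + 1*x 2 ∧
      -1 ≤ 0*x 0 + 1*x 1 + 0*x 2 ∧ -1 ≤ 1*x 0 + 0*x 1 + 0*x 2} := by
  apply le_antisymm
  · rw [latticePoly, image_Delta2]
    apply convexHull_min
    · rintro x (rfl | rfl | rfl | rfl) <;>
        refine ⟨?_, ?_, ?_, ?_⟩ <;> simp [P1, P2, P3, P4] <;> norm_num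
    · exact (convF _ _ _).inter ((convF _ _ _).inter ((convF _ _ _).inter (convF _ _ _)))
  · rintro x ⟨c1, c2, c3, c4⟩
    rw [latticePoly, image_Delta2]
    refine mem_hull4 (p1 := P1) (p2 := P2) (p3 := P3) (p4 := P4)
      (by simp) (by simp) (by simp) (by simp)
      (w1 := (-6*x 0 + -4*x 1 + -1*x 2 + 1)/12) (w2 := (x 2 + 1)/12)
      (w3 := (x 1 + 1)/3) (w4 := (x 0 + 1)/2) ?_ ?_ ?_ ?_ (by ring) ?_
    · linarith
    · linarith
    · linarith
    · linarith
    · funext j; fin_cases j <;>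
        simp [P1, P2, P3, P4] <;> ring

lemma contF (a b c : ℝ) : Continuous (fun x : Fin 3 → ℝ => a*x 0 + b*x 1 + c*x 2) := by
  fun_prop

lemma interior_strict {P : Set (Fin 3 → ℝ)} {f : (Fin 3 → ℝ) → ℝ}
    (hf : IsLinearMap ℝ f) (hc : Continuous f)
    (hP : ∀ y ∈ P, -1 ≤ f y) {x : Fin 3 → ℝ} (hx : x ∈ interior P)
    (w : Fin 3 → ℝ) (hw : f w < 0) : -1 < f x := by
  have hcont : Continuous (fun t : ℝ => x + t • w) := by fun_prop
  have hten : Filter.Tendsto (fun t : ℝ => x + t • w) (nhds 0) (nhds x) := by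
    have := hcont.tendsto 0
    simpa using this
  have hev : (fun t : ℝ => x + t • w) ⁻¹' interior P ∈ nhds (0:ℝ) :=
    hten (isOpen_interior.mem_nhds hx)
  obtain ⟨ε, hε, hball⟩ := Metric.mem_nhds_iff.mp hev
  have ht : x + (ε/2) • w ∈ P := by
    have : (ε/2 : ℝ) ∈ Metric.ball (0:ℝ) ε := by
      rw [Metric.mem_ball, Real.dist_eq, sub_zero, abs_of_pos (by linarith : (0:ℝ) < ε/2)]
      linarith
    exact interior_subset (hball this)
  have hle : -1 ≤ f x + (ε/2) * f w := by
    have := hP _ ht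
    rwa [hf.map_add, hf.map_smul, smul_eq_mul] at this
  nlinarith [hP x (interior_subset hx)]

lemma zero_interior : (0 : Fin 3 → ℝ) ∈ interior (latticePoly Delta2) := by
  rw [mem_interior]
  refine ⟨{x : Fin 3 → ℝ | -1 < -6*x 0 + -4*x 1 + -1*x 2 ∧ -1 < 0*x 0 + 0*x 1 + 1*x 2 ∧
      -1 < 0*x 0 + 1*x 1 + 0*x 2 ∧ -1 < 1*x 0 + 0*x 1 + 0*x 2}, ?_, ?_, ?_⟩
  · intro x hx; rw [hrepP]; exact ⟨hx.1.le, hx.2.1.le, hx.2.2.1.le, hx.2.2.2.le⟩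
  · exact (isOpen_lt continuous_const (contF _ _ _)).inter
      ((isOpen_lt continuous_const (contF _ _ _)).inter
        ((isOpen_lt continuous_const (contF _ _ _)).inter
          (isOpen_lt continuous_const (contF _ _ _))))
  · norm_num

lemma unique_lattice (v : V3) (hv : toR v ∈ interior (latticePoly Delta2)) : v = 0 := by
  have h1 : -1 < -6 * toR v 0 + -4 * toR v 1 + -1 * toR v 2 :=
    interior_strict (linF _ _ _) (contF _ _ _)
      (fun y hy => by rw [hrepP] at hy; exact hy.1) hv ![1,0,0] (by norm_num [Matrix.cons_val_two, Matrix.tail_cons, Matrix.head_cons])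
  have h2 : -1 < 0 * toR v 0 + 0 * toR v 1 + 1 * toR v 2 :=
    interior_strict (linF _ _ _) (contF _ _ _)
      (fun y hy => by rw [hrepP] at hy; exact hy.2.1) hv ![0,0,-1] (by norm_num [Matrix.cons_val_two, Matrix.tail_cons, Matrix.head_cons])
  have h3 : -1 < 0 * toR v 0 + 1 * toR v 1 + 0 * toR v 2 :=
    interior_strict (linF _ _ _) (contF _ _ _)
      (fun y hy => by rw [hrepP] at hy; exact hy.2.2.1) hv ![0,-1,0] (by norm_num)
  have h4 : -1 < 1 * toR v 0 + 0 * toR v 1 + 0 * toR v 2 :=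
    interior_strict (linF _ _ _) (contF _ _ _)
      (fun y hy => by rw [hrepP] at hy; exact hy.2.2.2) hv ![-1,0,0] (by norm_num)
  simp only [toR] at h1 h2 h3 h4
  have h1' : (-1:ℤ) < -6 * v 0 + -4 * v 1 + -1 * v 2 := by exact_mod_cast h1
  have h2' : (-1:ℤ) < v 2 := by
    have : (-1:ℝ) < (v 2 : ℝ) := by linarith
    exact_mod_cast this
  have h3' : (-1:ℤ) < v 1 := by
    have : (-1:ℝ) < (v 1 : ℝ) := by linarith
    exact_mod_cast this
  have h4' : (-1:ℤ) < v 0 := by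
    have : (-1:ℝ) < (v 0 : ℝ) := by linarith
    exact_mod_cast this
  have e0 : v 0 = 0 := by omega
  have e1 : v 1 = 0 := by omega
  have e2 : v 2 = 0 := by omega
  funext i
  fin_cases i
  · exact e0
  · exact e1
  · exact e2

noncomputable def Q1 : Fin 3 → ℝ := ![-6,-4,-1]
noncomputable def Q2 : Fin 3 → ℝ := ![0,0,1]
noncomputable def Q3 : Fin 3 → ℝ := ![0,1,0]
noncomputable def Q4 : Fin 3 → ℝ := ![1,0,0]

def DualV : Finset V3 := {![(-6:ℤ),-4,-1], ![(0:ℤ),0,1], ![(0:ℤ),1,0], ![(1:ℤ),0,0]}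

lemma toRQ1 : toR ![(-6:ℤ),-4,-1] = Q1 := by funext i; fin_cases i <;> simp [toR, Q1]
lemma toRQ2 : toR ![(0:ℤ),0,1] = Q2 := by funext i; fin_cases i <;> simp [toR, Q2]
lemma toRQ3 : toR ![(0:ℤ),1,0] = Q3 := by funext i; fin_cases i <;> simp [toR, Q3]
lemma toRQ4 : toR ![(1:ℤ),0,0] = Q4 := by funext i; fin_cases i <;> simp [toR, Q4]

lemma image_DualV : toR '' (DualV : Set V3) = {Q1, Q2, Q3, Q4} := by
  simp [DualV, Set.image_insert_eq, toRQ1, toRQ2, toRQ3, toRQ4]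

lemma polar_eq : polarDual (latticePoly Delta2) =
    {m : Fin 3 → ℝ | -1 ≤ -1*m 0 + -1*m 1 + -1*m 2 ∧ -1 ≤ -1*m 0 + -1*m 1 + 11*m 2 ∧
      -1 ≤ -1*m 0 + 2*m 1 + -1*m 2 ∧ -1 ≤ 1*m 0 + -1*m 1 + -1*m 2} := by
  ext m
  constructor
  · intro hm
    have hsub : {P1, P2, P3, P4} ⊆ latticePoly Delta2 := by
      rw [latticePoly, image_Delta2]; exact subset_convexHull ℝ _
    have c1 := hm P1 (hsub (by simp))
    have c2 := hm P2 (hsub (by simp))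
    have c3 := hm P3 (hsub (by simp))
    have c4 := hm P4 (hsub (by simp))
    simp only [pairR, Fin.sum_univ_three, P1, P2, P3, P4, Matrix.cons_val_zero,
      Matrix.cons_val_one, Matrix.head_cons, Matrix.cons_val_two, Matrix.tail_cons] at c1 c2 c3 c4
    refine ⟨by linarith, by linarith, by linarith, by linarith⟩
  · rintro ⟨c1, c2, c3, c4⟩ v hv
    rw [latticePoly, image_Delta2] at hv
    have hconv : Convex ℝ {v : Fin 3 → ℝ | -1 ≤ pairR m v} := by
      have : {v : Fin 3 → ℝ | -1 ≤ pairR m v}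
          = {v : Fin 3 → ℝ | -1 ≤ m 0 * v 0 + m 1 * v 1 + m 2 * v 2} := by
        simp only [pairR, Fin.sum_univ_three]
      rw [this]; exact convF _ _ _
    refine convexHull_min ?_ hconv hv
    rintro y (rfl | rfl | rfl | rfl) <;>
      simp only [Set.mem_setOf_eq, pairR, Fin.sum_univ_three, P1, P2, P3, P4,
        Matrix.cons_val_zero, Matrix.cons_val_one, Matrix.head_cons, Matrix.cons_val_two,
        Matrix.tail_cons] <;> linarith

lemma dual_hrep : latticePoly DualV =
    {m : Fin 3 → ℝ | -1 ≤ -1*m 0 + -1*m 1 + -1*m 2 ∧ -1 ≤ -1*m 0 + -1*m 1 + 11*m 2 ∧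
      -1 ≤ -1*m 0 + 2*m 1 + -1*m 2 ∧ -1 ≤ 1*m 0 + -1*m 1 + -1*m 2} := by
  apply le_antisymm
  · rw [latticePoly, image_DualV]
    apply convexHull_min
    · rintro x (rfl | rfl | rfl | rfl) <;>
        refine ⟨?_, ?_, ?_, ?_⟩ <;> simp [Q1, Q2, Q3, Q4] <;> norm_num
    · exact (convF _ _ _).inter ((convF _ _ _).inter ((convF _ _ _).inter (convF _ _ _)))
  · rintro x ⟨c1, c2, c3, c4⟩
    rw [latticePoly, image_DualV]
    refine mem_hull4 (p1 := Q1) (p2 := Q2) (p3 := Q3) (p4 := Q4)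
      (by simp) (by simp) (by simp) (by simp)
      (w1 := (-1*x 0 + -1*x 1 + -1*x 2 + 1)/12) (w2 := (-1*x 0 + -1*x 1 + 11*x 2 + 1)/12)
      (w3 := (-1*x 0 + 2*x 1 + -1*x 2 + 1)/3) (w4 := (1*x 0 + -1*x 1 + -1*x 2 + 1)/2)
      ?_ ?_ ?_ ?_ (by ring) ?_
    · linarith
    · linarith
    · linarith
    · linarith
    · funext j; fin_cases j <;> simp [Q1, Q2, Q3, Q4] <;> ring

theorem Delta2_isReflexive : IsReflexive Delta2 := by
  unfold IsReflexive
  exact ⟨zero_interior, unique_lattice, DualV, by rw [polar_eq, dual_hrep]⟩
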